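/- There exists a constant c > 0 such that the sequence (α_j) defined by α_0 = 1, α_1 = 1/6, and α_j = (4/(5^j - 5)) Σ_{ℓ=1}^{j-1} α_{j-ℓ} α_ℓ for j ≥ 2, satisfies 0 < α_j ≤ c · (j!)^{-log 5 / log 2} for all j ≥ 0. -/

import Mathlib

theorem alpha_bound (α : ℕ → ℝ) (hα0 : α 0 = 1) (hα1 : α 1 = 1/6)
    (hαrec : ∀ j ≥ 2, α j = (4 / ((5:ℝ)^j - 5)) * ∑ ℓ ∈ Finset.Ico 1 j, α (j - ℓ) * α ℓ) :
    ∃ c > 0, ∀ j, 0 < α j ∧ α j ≤ c * (Nat.factorial j : ℝ) ^ (-(Real.log 5 / Real.log 2)) := by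
  set γ : ℝ := Real.log 5 / Real.log 2 with hγdef
  have h2γ : (2:ℝ) ^ γ = 5 := by
    have : γ = Real.logb 2 5 := rfl
    rw [this]
    exact Real.rpow_logb (by norm_num) (by norm_num) (by norm_num)
  have hγ1 : 1 ≤ γ := by
    rw [hγdef, le_div_iff₀ (Real.log_pos (by norm_num)), one_mul]
    exact Real.log_le_log (by norm_num) (by norm_num)
  set β : ℕ → ℝ := fun j => ((Nat.factorial j : ℝ)) ^ (-γ) with hβdef
  have hβpos : ∀ j, 0 < β j := fun j =>
    Real.rpow_pos_of_pos (Nat.cast_pos.mpr (Nat.factorial_pos j)) _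
  have hβ0 : β 0 = 1 := by simp [hβdef]
  have hβ1 : β 1 = 1 := by simp [hβdef]
  -- product bound : β (j-ℓ) * β ℓ ≤ (2^j)^(γ-1) * choose j ℓ * β j
  have hprod : ∀ j : ℕ, ∀ ℓ ∈ Finset.Ico 1 j,
      β (j - ℓ) * β ℓ ≤ ((2:ℝ)^j) ^ (γ-1) * (j.choose ℓ : ℝ) * β j := by
    intro j ℓ hℓ
    rw [Finset.mem_Ico] at hℓ
    have hℓj : ℓ ≤ j := le_of_lt hℓ.2
    have hC1 : 1 ≤ j.choose ℓ := Nat.one_le_iff_ne_zero.mpr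
      (by simpa [Nat.choose_eq_zero_iff] using not_lt.mpr hℓj)
    have hCpos : (0:ℝ) < (j.choose ℓ : ℝ) := by exact_mod_cast hC1
    have hfac : (j.choose ℓ : ℝ) * ((j - ℓ).factorial * ℓ.factorial) = j.factorial := by
      have := Nat.choose_mul_factorial_mul_factorial hℓj
      push_cast [← this]
      ring
    -- β (j-ℓ) * β ℓ = (choose j ℓ)^γ * β j
    have key : β (j - ℓ) * β ℓ = (j.choose ℓ : ℝ) ^ γ * β j := by
      have h1 : β (j - ℓ) * β ℓ = (((j - ℓ).factorial * ℓ.factorial : ℝ)) ^ (-γ) := by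
        rw [hβdef]
        rw [← Real.mul_rpow (by positivity) (by positivity)]
      have h2 : β j = ((j.choose ℓ : ℝ)) ^ (-γ) * (((j - ℓ).factorial * ℓ.factorial : ℝ)) ^ (-γ) := by
        rw [hβdef, ← Real.mul_rpow (by positivity) (by positivity), hfac]
      rw [h1, h2, ← mul_assoc, ← Real.rpow_add hCpos]
      norm_num
    rw [key]
    have hsplit : (j.choose ℓ : ℝ) ^ γ = (j.choose ℓ : ℝ) ^ (γ - 1) * (j.choose ℓ : ℝ) := by
      rw [Real.rpow_sub hCpos, Real.rpow_one]
      field_simp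
    rw [hsplit]
    have hCle : (j.choose ℓ : ℝ) ≤ (2:ℝ)^j := by
      have : j.choose ℓ ≤ 2 ^ j := by
        calc j.choose ℓ ≤ ∑ m ∈ Finset.range (j+1), j.choose m :=
              Finset.single_le_sum (fun i _ => Nat.zero_le _)
                (Finset.mem_range.mpr (Nat.lt_succ_of_le hℓj))
          _ = 2 ^ j := Nat.sum_range_choose j
      exact_mod_cast this
    have h3 : (j.choose ℓ : ℝ) ^ (γ - 1) ≤ ((2:ℝ)^j) ^ (γ - 1) :=
      Real.rpow_le_rpow (le_of_lt hCpos) hCle (by linarith)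
    have := mul_le_mul_of_nonneg_right h3 (le_of_lt hCpos)
    have := mul_le_mul_of_nonneg_right this (le_of_lt (hβpos j))
    linarith
  -- sum of binomials over Ico 1 j bounded by 2^j
  have hsum_choose : ∀ j : ℕ, (∑ ℓ ∈ Finset.Ico 1 j, (j.choose ℓ : ℝ)) ≤ (2:ℝ)^j := by
    intro j
    have h1 : (∑ ℓ ∈ Finset.Ico 1 j, j.choose ℓ) ≤ ∑ ℓ ∈ Finset.range (j+1), j.choose ℓ := by
      apply Finset.sum_le_sum_of_subset_of_nonneg
      · intro x hx
        rw [Finset.mem_Ico] at hx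
        exact Finset.mem_range.mpr (by omega)
      · exact fun _ _ _ => Nat.zero_le _
    rw [Nat.sum_range_choose] at h1
    push_cast
    exact_mod_cast h1
  -- (2^j)^γ = 5^j
  have h2γj : ∀ j : ℕ, ((2:ℝ)^j) ^ γ = (5:ℝ)^j := by
    intro j
    rw [← Real.rpow_natCast (2:ℝ) j, ← Real.rpow_natCast (5:ℝ) j, ← h2γ,
      ← Real.rpow_mul (by norm_num), ← Real.rpow_mul (by norm_num)]
    ring_nf
  -- main claim
  have key : ∀ j : ℕ, 0 < α j ∧ (1 ≤ j → α j ≤ (1/6) * β j) := by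
    intro j
    induction j using Nat.strong_induction_on with
    | _ j ih =>
      match j, ih with
      | 0, _ => exact ⟨by rw [hα0]; norm_num, by omega⟩
      | 1, _ => exact ⟨by rw [hα1]; norm_num, fun _ => by rw [hα1, hβ1]; norm_num⟩
      | (k+2), ih =>
        set j := k + 2 with hj
        have hj2 : 2 ≤ j := by omega
        have hrec := hαrec j hj2
        have h5pos : (0:ℝ) < (5:ℝ)^j - 5 := by
          have : (5:ℝ)^2 ≤ (5:ℝ)^j := pow_le_pow_right₀ (by norm_num) hj2
          nlinarith
        have hmem : ∀ ℓ ∈ Finset.Ico 1 j, 1 ≤ j - ℓ ∧ j - ℓ < j ∧ 1 ≤ ℓ ∧ ℓ < j := by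
          intro ℓ hℓ; rw [Finset.mem_Ico] at hℓ; omega
        -- positivity
        have hSpos : 0 < ∑ ℓ ∈ Finset.Ico 1 j, α (j - ℓ) * α ℓ := by
          apply Finset.sum_pos
          · intro ℓ hℓ
            obtain ⟨_, h2, _, h4⟩ := hmem ℓ hℓ
            exact mul_pos (ih _ h2).1 (ih _ h4).1
          · exact ⟨1, Finset.mem_Ico.mpr ⟨le_refl _, by omega⟩⟩
        have hαpos : 0 < α j := by
          rw [hrec]
          exact mul_pos (div_pos (by norm_num) h5pos) hSpos
        refine ⟨hαpos, fun _ => ?_⟩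
        -- bound the sum
        have hSle : (∑ ℓ ∈ Finset.Ico 1 j, α (j - ℓ) * α ℓ)
            ≤ (1/36) * (((2:ℝ)^j) ^ (γ-1) * ((2:ℝ)^j) * β j) := by
          calc (∑ ℓ ∈ Finset.Ico 1 j, α (j - ℓ) * α ℓ)
              ≤ ∑ ℓ ∈ Finset.Ico 1 j, (1/36) * (β (j - ℓ) * β ℓ) := by
                apply Finset.sum_le_sum
                intro ℓ hℓ
                obtain ⟨h1, h2, h3, h4⟩ := hmem ℓ hℓ
                have ha := (ih _ h2).2 h1
                have hb := (ih _ h4).2 h3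
                have ha0 := le_of_lt (ih _ h2).1
                have hb0 := le_of_lt (ih _ h4).1
                have := mul_le_mul ha hb hb0 (by positivity)
                nlinarith [hβpos (j - ℓ), hβpos ℓ]
            _ ≤ ∑ ℓ ∈ Finset.Ico 1 j, (1/36) * (((2:ℝ)^j) ^ (γ-1) * (j.choose ℓ : ℝ) * β j) := by
                apply Finset.sum_le_sum
                intro ℓ hℓ
                have := hprod j ℓ hℓ
                linarith
            _ = (1/36) * (((2:ℝ)^j) ^ (γ-1) * (∑ ℓ ∈ Finset.Ico 1 j, (j.choose ℓ : ℝ)) * β j) := by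
                rw [← Finset.mul_sum, ← Finset.sum_mul, ← Finset.mul_sum]
            _ ≤ (1/36) * (((2:ℝ)^j) ^ (γ-1) * ((2:ℝ)^j) * β j) := by
                have h1 : (0:ℝ) < ((2:ℝ)^j) ^ (γ-1) := Real.rpow_pos_of_pos (by positivity) _
                have h2 := hsum_choose j
                have h3 := mul_le_mul_of_nonneg_left h2 (le_of_lt h1)
                have h4 := mul_le_mul_of_nonneg_right h3 (le_of_lt (hβpos j))
                nlinarith
        have hpow : ((2:ℝ)^j) ^ (γ-1) * ((2:ℝ)^j) = (5:ℝ)^j := by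
          rw [← h2γj j, Real.rpow_sub (by positivity), Real.rpow_one]
          field_simp
        rw [hpow] at hSle
        rw [hrec]
        have hfin : 4 / ((5:ℝ)^j - 5) * ((1/36) * ((5:ℝ)^j * β j)) ≤ (1/6) * β j := by
          rw [div_mul_eq_mul_div, div_le_iff₀ h5pos]
          have h25 : (25:ℝ) ≤ (5:ℝ)^j := by
            have : (5:ℝ)^2 ≤ (5:ℝ)^j := pow_le_pow_right₀ (by norm_num) hj2
            nlinarith
          nlinarith [hβpos j]
        calc 4 / ((5:ℝ)^j - 5) * (∑ ℓ ∈ Finset.Ico 1 j, α (j - ℓ) * α ℓ)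
            ≤ 4 / ((5:ℝ)^j - 5) * ((1/36) * ((5:ℝ)^j * β j)) := by
              apply mul_le_mul_of_nonneg_left _ (by positivity)
              nlinarith
          _ ≤ (1/6) * β j := hfin
  refine ⟨1, by norm_num, fun j => ⟨(key j).1, ?_⟩⟩
  rcases Nat.eq_zero_or_pos j with h | h
  · subst h
    rw [hα0]
    simp [one_mul]
  · rw [one_mul]
    show α j ≤ β j
    have h6 := (key j).2 h
    have h7 := hβpos j
    linarith
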